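/- Let x : [t₀, ∞) → ℝⁿ be a C¹ trajectory of ẋ = f(x) + g(x)u(x) where u is a feedback law, let h : ℝⁿ → ℝ be C¹, and suppose u(x(t)) ∈ K_cbf(x(t)) = {u : ∇h(x)ᵀ(f(x) + g(x)u) ≥ -(1/k)h(x)} for all t with some fixed k > 0. If h(x(t₀)) ≥ 0 then h(x(t)) ≥ 0 for all t ≥ t₀. -/

import Mathlib

/-- CBF safety along a closed-loop trajectory with linear class-K function. -/
theorem stmt_11 {n m : ℕ}
    (f : EuclideanSpace ℝ (Fin n) → EuclideanSpace ℝ (Fin n))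
    (g : EuclideanSpace ℝ (Fin n) → EuclideanSpace ℝ (Fin m) →L[ℝ] EuclideanSpace ℝ (Fin n))
    (u : EuclideanSpace ℝ (Fin n) → EuclideanSpace ℝ (Fin m))
    (x : ℝ → EuclideanSpace ℝ (Fin n))
    (hx : ∀ t, HasDerivAt x (f (x t) + g (x t) (u (x t))) t)
    (h : EuclideanSpace ℝ (Fin n) → ℝ) (hh : ContDiff ℝ 1 h)
    (k t₀ : ℝ) (hk : 0 < k)
    (hu : ∀ t ≥ t₀,
      fderiv ℝ h (x t) (f (x t) + g (x t) (u (x t))) ≥ -(1/k) * h (x t))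
    (h0 : h (x t₀) ≥ 0) :
    ∀ t ≥ t₀, h (x t) ≥ 0 := by
  intro t ht
  set y : ℝ → ℝ := fun s => h (x s) with hy
  have hdy : ∀ s, HasDerivAt y (fderiv ℝ h (x s) (f (x s) + g (x s) (u (x s)))) s := by
    intro s
    exact ((hh.differentiable one_ne_zero (x s)).hasFDerivAt).comp_hasDerivAt s (hx s)
  -- apply Gronwall to z = -y with K = -(1/k), ε = 0
  set z : ℝ → ℝ := fun s => -y s with hz
  set z' : ℝ → ℝ := fun s => -(fderiv ℝ h (x s) (f (x s) + g (x s) (u (x s)))) with hz'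
  have hdz : ∀ s, HasDerivAt z (z' s) s := fun s => (hdy s).neg
  have key : z t ≤ gronwallBound (z t₀) (-(1/k)) 0 (t - t₀) := by
    apply le_gronwallBound_of_liminf_deriv_right_le
      (fun s hs => ((hdz s).continuousAt).continuousWithinAt)
      (a := t₀) (b := t) (f' := z')
    · intro s hs r hr
      have := ((hdz s).hasDerivWithinAt (s := Set.Ici s)).liminf_right_slope_le hr
      exact this.mono fun w hw => by
        simpa [slope_def_field, div_eq_inv_mul] using hw
    · exact le_rfl
    · intro s hs
      have := hu s hs.1
      simp only [hz', hz, hy]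
      linarith
    · exact ⟨ht, le_rfl⟩
  have hb : gronwallBound (z t₀) (-(1/k)) 0 (t - t₀) ≤ 0 := by
    rw [gronwallBound_ε0]
    have : z t₀ ≤ 0 := by simpa [hz, hy] using h0
    have := Real.exp_pos (-(1/k) * (t - t₀))
    nlinarith
  have : z t ≤ 0 := key.trans hb
  simpa [hz, hy] using this
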